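/- Let S be a locally compact Hausdorff space and X = C₀(S) the Banach space of continuous complex functions vanishing at infinity with the sup norm, whose pseudohyperbolic distance for x, y in the open unit ball is ρ_X(x,y) = sup_{t ∈ S} ρ(x(t), y(t)) with ρ the disk pseudohyperbolic distance. If x, y are in the open unit ball of X with max(‖x‖,‖y‖) > 0 and z ∈ ℂ satisfies |z| ≤ (1+max(‖x‖,‖y‖))/(2 max(‖x‖,‖y‖)), then zx, zy lie in the open unit ball and ρ_X(zx, zy) ≤ 2|z| ρ_X(x,y). -/

import Mathlib

open Complex

/-- The pseudohyperbolic distance on the open unit disk. -/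
noncomputable def pseudoDist (a b : ℂ) : ℝ :=
  ‖(a - b) / (1 - (starRingEnd ℂ) a * b)‖

section aux
lemma pd_eq' (a b : ℂ) : pseudoDist a b =
    ‖a - b‖ / ‖1 - (starRingEnd ℂ) a * b‖ := by
  simp [pseudoDist, map_div₀]

lemma pd_le_one' {a b : ℂ} (ha : ‖a‖ < 1) (hb : ‖b‖ < 1) :
    pseudoDist a b ≤ 1 := by
  have hna : Complex.normSq a < 1 := by
    have := Complex.sq_norm a; nlinarith [norm_nonneg a]
  have hnb : Complex.normSq b < 1 := by
    have := Complex.sq_norm b; nlinarith [norm_nonneg b]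
  have hid : Complex.normSq (1 - (starRingEnd ℂ) a * b) - Complex.normSq (a - b)
      = (1 - Complex.normSq a) * (1 - Complex.normSq b) := by
    simp [Complex.normSq_apply, Complex.sub_re, Complex.sub_im, Complex.mul_re, Complex.mul_im]
    ring
  have h1 : Complex.normSq (a - b) ≤ Complex.normSq (1 - (starRingEnd ℂ) a * b) := by
    nlinarith
  have h2 : ‖a - b‖ ≤ ‖1 - (starRingEnd ℂ) a * b‖ := by
    rw [Complex.norm_def, Complex.norm_def]
    exact Real.sqrt_le_sqrt h1
  rw [pd_eq']
  exact div_le_one_of_le₀ h2 (norm_nonneg _)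

lemma key {a b l : ℂ} (ha : ‖a‖ < 1) (hb : ‖b‖ < 1)
    (hcond : 2 * ‖l‖ * max (‖a‖) (‖b‖)
      ≤ 1 + max (‖a‖) (‖b‖)) :
    pseudoDist (l * a) (l * b) ≤ 2 * ‖l‖ * pseudoDist a b := by
  set m : ℝ := max (‖a‖) (‖b‖) with hm
  have hA : ‖a‖ ≤ m := le_max_left _ _
  have hB : ‖b‖ ≤ m := le_max_right _ _
  have hm0 : 0 ≤ m := le_trans (norm_nonneg a) hA
  have hm1 : m < 1 := max_lt ha hb
  have hL0 : 0 ≤ ‖l‖ := norm_nonneg l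
  set L := ‖l‖ with hLdef
  set w : ℂ := (starRingEnd ℂ) a * b with hw
  set u : ℝ := ‖w‖ with hu
  have hu0 : 0 ≤ u := norm_nonneg w
  have huab : u = ‖a‖ * ‖b‖ := by
    simp [hu, hw, map_mul]
  have hum : u ≤ m * m := by
    rw [huab]; exact mul_le_mul hA hB (norm_nonneg b) hm0
  have hsq : (2*L*m) * (2*L*m) ≤ (1+m) * (1+m) :=
    mul_self_le_mul_self (by positivity) hcond
  have hconj : (starRingEnd ℂ) (l * a) * (l * b) = ((L^2 : ℝ) : ℂ) * w := by
    rw [map_mul]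
    have h1 : ((L^2 : ℝ) : ℂ) = (starRingEnd ℂ) l * l := by
      rw [hLdef, Complex.sq_norm, Complex.normSq_eq_conj_mul_self]
    rw [h1, hw]; ring
  have hsu : L^2 * u < 1 := by nlinarith [sq_nonneg (1 - m)]
  have hkey : ‖1 - w‖ ≤ 2 * ‖1 - ((L^2 : ℝ) : ℂ) * w‖ := by
    have h1 : ‖1 - w‖ ≤ ‖1 - ((L^2 : ℝ) : ℂ) * w‖
        + ‖((L^2 : ℝ) : ℂ) * w - w‖ :=
      norm_sub_le_norm_sub_add_norm_sub 1 (((L^2 : ℝ) : ℂ) * w) w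
    have h2 : ‖((L^2 : ℝ) : ℂ) * w - w‖ = |L^2 - 1| * u := by
      have h : ((L^2 : ℝ) : ℂ) * w - w = ((L^2 - 1 : ℝ) : ℂ) * w := by push_cast; ring
      rw [h, norm_mul, Complex.norm_real, Real.norm_eq_abs]
    have h3 : 1 - L^2 * u ≤ ‖1 - ((L^2 : ℝ) : ℂ) * w‖ := by
      have h4 : ‖(1:ℂ)‖ - ‖((L^2:ℝ):ℂ) * w‖ ≤ ‖(1:ℂ) - ((L^2:ℝ):ℂ) * w‖ :=
        norm_sub_norm_le _ _
      simp only [norm_mul, Complex.norm_real, Real.norm_eq_abs, norm_one] at h4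
      rw [_root_.abs_of_nonneg (by positivity : (0:ℝ) ≤ L^2)] at h4
      rw [hu]
      linarith
    have h5 : |L^2 - 1| * u ≤ 1 - L^2 * u := by
      rcases le_or_gt (L^2) 1 with h | h
      · rw [abs_of_nonpos (by linarith)]
        have : u ≤ 1 := by nlinarith
        nlinarith
      · rw [abs_of_pos (by linarith)]
        nlinarith [sq_nonneg (1 - m),
          mul_le_mul_of_nonneg_left hum (by linarith : (0:ℝ) ≤ 2*L^2 - 1)]
    linarith
  have hu1 : u < 1 := lt_of_le_of_lt hum (by nlinarith)
  have hd0 : (0:ℝ) < ‖1 - w‖ := by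
    refine norm_pos_iff.mpr ?_
    intro h
    rw [sub_eq_zero] at h
    rw [hu, ← h] at hu1
    simp at hu1
  have hdX : (0:ℝ) < ‖1 - ((L^2 : ℝ) : ℂ) * w‖ := by
    have h3 : 1 - L^2 * u ≤ ‖1 - ((L^2 : ℝ) : ℂ) * w‖ := by
      have h4 : ‖(1:ℂ)‖ - ‖((L^2:ℝ):ℂ) * w‖ ≤ ‖(1:ℂ) - ((L^2:ℝ):ℂ) * w‖ :=
        norm_sub_norm_le _ _
      simp only [norm_mul, Complex.norm_real, Real.norm_eq_abs, norm_one] at h4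
      rw [_root_.abs_of_nonneg (by positivity : (0:ℝ) ≤ L^2)] at h4
      rw [hu]
      linarith
    linarith
  rw [pd_eq', pd_eq', hconj, ← hw]
  have hnum : ‖l * a - l * b‖ = L * ‖a - b‖ := by
    rw [show l * a - l * b = l * (a - b) by ring, norm_mul]
  rw [hnum]
  set N := ‖a - b‖ with hN
  have hN0 : 0 ≤ N := norm_nonneg _
  rw [show 2 * L * (N / ‖1 - w‖) = (2 * L * N) / ‖1 - w‖ by ring]
  rw [div_le_div_iff₀ hdX hd0]
  nlinarith [mul_le_mul_of_nonneg_left hkey (by positivity : (0:ℝ) ≤ L * N)]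

end aux

theorem stmt18 {S : Type*} [TopologicalSpace S] [LocallyCompactSpace S] [T2Space S]
    (x y : ZeroAtInftyContinuousMap S ℂ) (hx : ‖x‖ < 1) (hy : ‖y‖ < 1)
    (hmax : 0 < max ‖x‖ ‖y‖) (z : ℂ)
    (hz : ‖z‖ ≤ (1 + max ‖x‖ ‖y‖) / (2 * max ‖x‖ ‖y‖)) :
    ‖z • x‖ < 1 ∧ ‖z • y‖ < 1 ∧
      (⨆ t : S, pseudoDist ((z • x) t) ((z • y) t)) ≤
        2 * ‖z‖ * ⨆ t : S, pseudoDist (x t) (y t) := by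
  set M : ℝ := max ‖x‖ ‖y‖ with hM
  have hM1 : M < 1 := max_lt hx hy
  have hzM : ‖z‖ * (2 * M) ≤ 1 + M := by
    rw [← le_div_iff₀ (by linarith : (0:ℝ) < 2 * M)]; exact hz
  have hz0 : 0 ≤ ‖z‖ := norm_nonneg z
  have hnx : ‖z • x‖ = ‖z‖ * ‖x‖ := by
    exact norm_smul z x
  have hny : ‖z • y‖ = ‖z‖ * ‖y‖ := by
    exact norm_smul z y
  have hxM : ‖x‖ ≤ M := le_max_left _ _
  have hyM : ‖y‖ ≤ M := le_max_right _ _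
  have hx0 : 0 ≤ ‖x‖ := norm_nonneg _
  have hy0 : 0 ≤ ‖y‖ := norm_nonneg _
  have hzx1 : ‖z • x‖ < 1 := by rw [hnx]; nlinarith
  have hzy1 : ‖z • y‖ < 1 := by rw [hny]; nlinarith
  refine ⟨hzx1, hzy1, ?_⟩
  -- S is nonempty
  have hS : Nonempty S := by
    rcases isEmpty_or_nonempty S with h | h
    · exfalso
      have hx' : x = 0 := DFunLike.ext _ _ fun t => isEmptyElim t
      have hy' : y = 0 := DFunLike.ext _ _ fun t => isEmptyElim t
      rw [hM, hx', hy', norm_zero] at hmax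
      simp at hmax
    · exact h
  -- pointwise norm bounds
  have haptx : ∀ t : S, ‖x t‖ ≤ ‖x‖ := fun t => by
    have := BoundedContinuousFunction.norm_coe_le_norm x.toBCF t
    rwa [ZeroAtInftyContinuousMap.norm_toBCF_eq_norm] at this
  have hapty : ∀ t : S, ‖y t‖ ≤ ‖y‖ := fun t => by
    have := BoundedContinuousFunction.norm_coe_le_norm y.toBCF t
    rwa [ZeroAtInftyContinuousMap.norm_toBCF_eq_norm] at this
  have hxlt : ∀ t : S, ‖x t‖ < 1 := fun t => lt_of_le_of_lt (haptx t) hx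
  have hylt : ∀ t : S, ‖y t‖ < 1 := fun t => lt_of_le_of_lt (hapty t) hy
  have hbdd : BddAbove (Set.range fun t : S => pseudoDist (x t) (y t)) := by
    refine ⟨1, ?_⟩
    rintro r ⟨t, rfl⟩
    exact pd_le_one' (hxlt t) (hylt t)
  refine ciSup_le fun t => ?_
  have hcond : 2 * ‖z‖ * max (‖x t‖) (‖y t‖)
      ≤ 1 + max (‖x t‖) (‖y t‖) := by
    set mt := max (‖x t‖) (‖y t‖) with hmt
    have h1 : mt ≤ M := max_le (le_trans (haptx t) hxM) (le_trans (hapty t) hyM)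
    have h2 : 0 ≤ mt := le_max_iff.mpr (Or.inl (norm_nonneg _))
    rcases le_or_gt (2 * ‖z‖) 1 with h | h
    · nlinarith
    · nlinarith
  have hpt : pseudoDist ((z • x) t) ((z • y) t)
      ≤ 2 * ‖z‖ * pseudoDist (x t) (y t) := by
    have := key (hxlt t) (hylt t) hcond (l := z)
    simpa [ZeroAtInftyContinuousMap.smul_apply, smul_eq_mul] using this
  refine le_trans hpt ?_
  exact mul_le_mul_of_nonneg_left (le_ciSup hbdd t) (by positivity)
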